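/- Let (X, ρ) be an extended metric space, r > 0, and suppose (V_n)_{n∈ℕ} is a sequence of subsets of X such that: the 3r-walk equivalence relation on each V_n has classes of finite diameter; for every x ∈ X there is n with B(x; r) ⊆ V_n; and whenever n < m and x ∈ V_n, the ball B(x; 4r) is either contained in or disjoint from V_m. Then there exist two sets U_0, U_1 covering X such that for i ∈ {0,1}, every class of the r-walk equivalence relation on U_i has finite diameter. -/

import Mathlib

open scoped ENNReal NNReal

/-- The `s`-walk equivalence relation on `U`. -/
def walkRel {X : Type*} [EMetricSpace X] (U : Set X) (s : ℝ≥0∞) : X → X → Prop :=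
  Relation.EqvGen fun a b => a ∈ U ∧ b ∈ U ∧ edist a b ≤ s

namespace Stmt12Aux

variable {X : Type*} [EMetricSpace X]

lemma walk_eq_or_mem {U : Set X} {s : ℝ≥0∞} {x y : X}
    (h : walkRel U s x y) : x = y ∨ (x ∈ U ∧ y ∈ U) := by
  induction h with
  | rel a b h => exact Or.inr ⟨h.1, h.2.1⟩
  | refl a => exact Or.inl rfl
  | symm a b h ih =>
      rcases ih with rfl | ⟨h1, h2⟩
      · exact Or.inl rfl
      · exact Or.inr ⟨h2, h1⟩
  | trans a b c h1 h2 ih1 ih2 =>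
      rcases ih1 with rfl | ⟨ha, hb⟩
      · exact ih2
      rcases ih2 with rfl | ⟨hb', hc⟩
      · exact Or.inr ⟨ha, hb⟩
      · exact Or.inr ⟨ha, hc⟩

/-- `2r`-ball of `x` contained in `V`. -/
def big (V : Set X) (r : ℝ≥0) (x : X) : Prop :=
  ∀ z : X, edist x z ≤ 2 * (r : ℝ≥0∞) → z ∈ V

/-- Shell point of `V` at scale `r`. -/
def shell (V : Set X) (r : ℝ≥0) (x : X) : Prop :=
  (∀ z : X, edist x z ≤ (r : ℝ≥0∞) → z ∈ V) ∧ ¬ big V r x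

lemma shell_level_eq (r : ℝ≥0) (V : ℕ → Set X)
    (hsep : ∀ n m, n < m → ∀ x ∈ V n,
      ({y : X | edist x y ≤ 4 * (r : ℝ≥0∞)} ⊆ V m ∨
        ∀ y : X, edist x y ≤ 4 * (r : ℝ≥0∞) → y ∉ V m))
    {n m : ℕ} {a b : X} (ha : shell (V n) r a) (hb : shell (V m) r b)
    (hab : edist a b ≤ (r : ℝ≥0∞)) : n = m := by
  have hr3 : (r : ℝ≥0∞) + 2 * r ≤ 4 * r := by
    calc (r : ℝ≥0∞) + 2 * r = 3 * r := by ring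
    _ ≤ 4 * r := mul_le_mul_left (by norm_num) _
  have hr4 : (r : ℝ≥0∞) ≤ 4 * r := by
    calc (r : ℝ≥0∞) = 1 * r := (one_mul _).symm
    _ ≤ 4 * r := mul_le_mul_left (by norm_num) _
  rcases lt_trichotomy n m with h | h | h
  · exfalso
    have haV : a ∈ V n := ha.1 a (by simp)
    have hbV : b ∈ V m := hb.1 b (by simp)
    rcases hsep n m h a haV with hc | hd
    · apply hb.2
      intro z hz
      apply hc
      show edist a z ≤ 4 * (r : ℝ≥0∞)
      calc edist a z ≤ edist a b + edist b z := edist_triangle _ _ _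
      _ ≤ (r : ℝ≥0∞) + 2 * r := add_le_add hab hz
      _ ≤ 4 * r := hr3
    · exact hd b (le_trans hab hr4) hbV
  · exact h
  · exfalso
    have haV : a ∈ V n := ha.1 a (by simp)
    have hbV : b ∈ V m := hb.1 b (by simp)
    rcases hsep m n h b hbV with hc | hd
    · apply ha.2
      intro z hz
      apply hc
      show edist b z ≤ 4 * (r : ℝ≥0∞)
      calc edist b z ≤ edist b a + edist a z := edist_triangle _ _ _
      _ ≤ (r : ℝ≥0∞) + 2 * r := add_le_add (by rwa [edist_comm]) hz
      _ ≤ 4 * r := hr3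
    · exact hd a (le_trans (by rwa [edist_comm]) hr4) haV

lemma walkU0 (r : ℝ≥0) (V : ℕ → Set X)
    (hsep : ∀ n m, n < m → ∀ x ∈ V n,
      ({y : X | edist x y ≤ 4 * (r : ℝ≥0∞)} ⊆ V m ∨
        ∀ y : X, edist x y ≤ 4 * (r : ℝ≥0∞) → y ∉ V m))
    {x y : X}
    (h : walkRel {x : X | ∃ n, shell (V n) r x} (r : ℝ≥0∞) x y) :
    x = y ∨ ∃ n, shell (V n) r x ∧ shell (V n) r y ∧
      walkRel (V n) (3 * (r : ℝ≥0∞)) x y := by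
  have hr13 : (r : ℝ≥0∞) ≤ 3 * r := by
    calc (r : ℝ≥0∞) = 1 * r := (one_mul _).symm
    _ ≤ 3 * r := mul_le_mul_left (by norm_num) _
  induction h with
  | rel a b h =>
      obtain ⟨⟨n, ha⟩, ⟨m, hb⟩, hab⟩ := h
      have hnm : n = m := shell_level_eq r V hsep ha hb hab
      subst hnm
      exact Or.inr ⟨n, ha, hb,
        Relation.EqvGen.rel _ _ ⟨ha.1 a (by simp), hb.1 b (by simp), le_trans hab hr13⟩⟩
  | refl a => exact Or.inl rfl
  | symm a b h ih =>
      rcases ih with rfl | ⟨n, ha, hb, w⟩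
      · exact Or.inl rfl
      · exact Or.inr ⟨n, hb, ha, Relation.EqvGen.symm _ _ w⟩
  | trans a b c h1 h2 ih1 ih2 =>
      rcases ih1 with rfl | ⟨n, ha, hb, w1⟩
      · exact ih2
      rcases ih2 with rfl | ⟨m, hb', hc, w2⟩
      · exact Or.inr ⟨n, ha, hb, w1⟩
      have hnm : n = m := shell_level_eq r V hsep hb hb' (by simp)
      subst hnm
      exact Or.inr ⟨n, ha, hc, Relation.EqvGen.trans _ _ _ w1 w2⟩

lemma walkU1 (r : ℝ≥0) (V : ℕ → Set X) (n : ℕ) {x y : X}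
    (h : walkRel {x : X | ∀ m, (∀ z : X, edist x z ≤ (r : ℝ≥0∞) → z ∈ V m) →
        big (V m) r x} (r : ℝ≥0∞) x y) :
    (big (V n) r x → big (V n) r y ∧ walkRel (V n) (3 * (r : ℝ≥0∞)) x y) ∧
    (big (V n) r y → big (V n) r x ∧ walkRel (V n) (3 * (r : ℝ≥0∞)) x y) := by
  have hr13 : (r : ℝ≥0∞) ≤ 3 * r := by
    calc (r : ℝ≥0∞) = 1 * r := (one_mul _).symm
    _ ≤ 3 * r := mul_le_mul_left (by norm_num) _
  have hr02 : (0 : ℝ≥0∞) ≤ 2 * r := zero_le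
  induction h with
  | rel a b h =>
      obtain ⟨haU, hbU, hab⟩ := h
      constructor
      · intro hQa
        have hPb : ∀ z : X, edist b z ≤ (r : ℝ≥0∞) → z ∈ V n := by
          intro z hz
          apply hQa
          calc edist a z ≤ edist a b + edist b z := edist_triangle _ _ _
          _ ≤ (r : ℝ≥0∞) + r := add_le_add hab hz
          _ = 2 * r := (two_mul _).symm
        have hQb : big (V n) r b := hbU n hPb
        exact ⟨hQb, Relation.EqvGen.rel _ _
          ⟨hQa a (by simpa using hr02), hQb b (by simpa using hr02), le_trans hab hr13⟩⟩
      · intro hQb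
        have hPa : ∀ z : X, edist a z ≤ (r : ℝ≥0∞) → z ∈ V n := by
          intro z hz
          apply hQb
          calc edist b z ≤ edist b a + edist a z := edist_triangle _ _ _
          _ ≤ (r : ℝ≥0∞) + r := add_le_add (by rwa [edist_comm]) hz
          _ = 2 * r := (two_mul _).symm
        have hQa : big (V n) r a := haU n hPa
        exact ⟨hQa, Relation.EqvGen.rel _ _
          ⟨hQa a (by simpa using hr02), hQb b (by simpa using hr02), le_trans hab hr13⟩⟩
  | refl a =>
      exact ⟨fun h => ⟨h, Relation.EqvGen.refl _⟩, fun h => ⟨h, Relation.EqvGen.refl _⟩⟩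
  | symm a b h ih =>
      refine ⟨fun hb => ?_, fun ha => ?_⟩
      · obtain ⟨ha, w⟩ := ih.2 hb
        exact ⟨ha, Relation.EqvGen.symm _ _ w⟩
      · obtain ⟨hb, w⟩ := ih.1 ha
        exact ⟨hb, Relation.EqvGen.symm _ _ w⟩
  | trans a b c h1 h2 ih1 ih2 =>
      refine ⟨fun ha => ?_, fun hc => ?_⟩
      · obtain ⟨hb, w1⟩ := ih1.1 ha
        obtain ⟨hc, w2⟩ := ih2.1 hb
        exact ⟨hc, Relation.EqvGen.trans _ _ _ w1 w2⟩
      · obtain ⟨hb, w2⟩ := ih2.2 hc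
        obtain ⟨ha, w1⟩ := ih1.2 hb
        exact ⟨ha, Relation.EqvGen.trans _ _ _ w1 w2⟩

end Stmt12Aux

/-- The toast criterion for asymptotic separation index at most 1 (at scale `r`). -/
theorem stmt12 {X : Type*} [EMetricSpace X] (r : ℝ≥0) (hr : 0 < r)
    (V : ℕ → Set X)
    (hbdd : ∀ n, ∀ x ∈ V n, ∃ R : ℝ≥0, ∀ y : X,
      walkRel (V n) ((3 * r : ℝ≥0) : ℝ≥0∞) x y → edist x y ≤ (R : ℝ≥0∞))
    (hcover : ∀ x : X, ∃ n, ∀ y : X, edist x y ≤ (r : ℝ≥0∞) → y ∈ V n)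
    (hsep : ∀ n m, n < m → ∀ x ∈ V n,
      ({y : X | edist x y ≤ ((4 * r : ℝ≥0) : ℝ≥0∞)} ⊆ V m ∨
        ∀ y : X, edist x y ≤ ((4 * r : ℝ≥0) : ℝ≥0∞) → y ∉ V m)) :
    ∃ U₀ U₁ : Set X, U₀ ∪ U₁ = Set.univ ∧
      (∀ x : X, ∃ R : ℝ≥0, ∀ y : X,
        walkRel U₀ (r : ℝ≥0∞) x y → edist x y ≤ (R : ℝ≥0∞)) ∧
      (∀ x : X, ∃ R : ℝ≥0, ∀ y : X,
        walkRel U₁ (r : ℝ≥0∞) x y → edist x y ≤ (R : ℝ≥0∞)) := by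
  classical
  open Stmt12Aux in
  have e3 : ((3 * r : ℝ≥0) : ℝ≥0∞) = 3 * (r : ℝ≥0∞) := by push_cast; ring
  have e4 : ((4 * r : ℝ≥0) : ℝ≥0∞) = 4 * (r : ℝ≥0∞) := by push_cast; ring
  rw [e3] at hbdd
  simp only [e4] at hsep
  refine ⟨{x : X | ∃ n, Stmt12Aux.shell (V n) r x},
    {x : X | ∀ m, (∀ z : X, edist x z ≤ (r : ℝ≥0∞) → z ∈ V m) → Stmt12Aux.big (V m) r x},
    ?_, ?_, ?_⟩
  · ext x
    simp only [Set.mem_union, Set.mem_setOf_eq, Set.mem_univ, iff_true]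
    by_cases hx : ∀ m, (∀ z : X, edist x z ≤ (r : ℝ≥0∞) → z ∈ V m) → Stmt12Aux.big (V m) r x
    · exact Or.inr hx
    · push_neg at hx
      obtain ⟨n, h1, h2⟩ := hx
      exact Or.inl ⟨n, h1, h2⟩
  · intro x
    by_cases hx : ∃ n, Stmt12Aux.shell (V n) r x
    · obtain ⟨n, hxn⟩ := hx
      have hxV : x ∈ V n := hxn.1 x (by simp)
      obtain ⟨R, hR⟩ := hbdd n x hxV
      refine ⟨R, fun y hy => ?_⟩
      rcases Stmt12Aux.walkU0 r V hsep hy with rfl | ⟨m, hxm, hym, w⟩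
      · simp
      · have hnm : n = m := Stmt12Aux.shell_level_eq r V hsep hxn hxm (by simp)
        subst hnm
        exact hR y w
    · refine ⟨0, fun y hy => ?_⟩
      rcases Stmt12Aux.walk_eq_or_mem hy with rfl | ⟨hxU, _⟩
      · simp
      · exact absurd hxU hx
  · intro x
    by_cases hx : ∀ m, (∀ z : X, edist x z ≤ (r : ℝ≥0∞) → z ∈ V m) → Stmt12Aux.big (V m) r x
    · obtain ⟨n, hn⟩ := hcover x
      have hQx : Stmt12Aux.big (V n) r x := hx n hn
      have hxV : x ∈ V n := hn x (by simp)
      obtain ⟨R, hR⟩ := hbdd n x hxV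
      refine ⟨R, fun y hy => ?_⟩
      exact hR y ((Stmt12Aux.walkU1 r V n hy).1 hQx).2
    · refine ⟨0, fun y hy => ?_⟩
      rcases Stmt12Aux.walk_eq_or_mem hy with rfl | ⟨hxU, _⟩
      · simp
      · exact absurd hxU hx
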